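/- Let M, N, m be positive integers with m ≥ 2, and let ζ_1, …, ζ_{m−1} ∈ P^-_N(M). If (u_1, …, u_m) and (v_1, …, v_m), with all u_i, v_i ∈ P^+_N(M), are two (possibly identical) solutions of the system, then Σ_{i=1}^{m−1} ~u_i(z)·v_i(z) + u_m(z)·~v_m(z) ∈ P^+(M), i.e., all coefficients of this Laurent matrix polynomial at negative powers of z vanish. -/

import Mathlib

noncomputable section

/-- The type of `M × M` Laurent matrix polynomials over `ℂ`. -/
abbrev LMP (M : ℕ) := Matrix (Fin M) (Fin M) (LaurentPolynomial ℂ)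

/-- The adjoint of a scalar Laurent polynomial: `~p(z) = Σ conj(A_n) z^{-n}`. -/
def lpAdj (p : LaurentPolynomial ℂ) : LaurentPolynomial ℂ :=
  AddMonoidAlgebra.ofCoeff (Finsupp.equivMapDomain (Equiv.neg ℤ) (Finsupp.mapRange (starRingEnd ℂ) (map_zero _) p.coeff))

/-- The adjoint of a Laurent matrix polynomial: `~P(z) = Σ A_nᴴ z^{-n}`. -/
def adjM {n : Type*} (P : Matrix n n (LaurentPolynomial ℂ)) :
    Matrix n n (LaurentPolynomial ℂ) :=
  fun i j => lpAdj (P j i)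

/-- The coefficient of `z^n` of a Laurent matrix polynomial, an `M × M` complex matrix. -/
def coeffM {M : ℕ} (P : LMP M) (n : ℤ) : Matrix (Fin M) (Fin M) ℂ :=
  fun i j => (P i j).coeff n

/-- `P^+(M)`: Laurent matrix polynomials with vanishing coefficients at negative powers. -/
def Pplus (M : ℕ) : Set (LMP M) := {P | ∀ n : ℤ, n < 0 → coeffM P n = 0}

/-- `P^-(M)`: Laurent matrix polynomials with vanishing coefficients at positive powers. -/
def Pminus (M : ℕ) : Set (LMP M) := {P | ∀ n : ℤ, 0 < n → coeffM P n = 0}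

/-- `P^+_N(M)`: coefficients vanish unless `0 ≤ n ≤ N`. -/
def PplusN (M N : ℕ) : Set (LMP M) := {P | ∀ n : ℤ, (n < 0 ∨ (N : ℤ) < n) → coeffM P n = 0}

/-- `P^-_N(M)`: coefficients vanish unless `-N ≤ n ≤ 0`. -/
def PminusN (M N : ℕ) : Set (LMP M) := {P | ∀ n : ℤ, (n < -(N : ℤ) ∨ 0 < n) → coeffM P n = 0}

/-- `(x_1, …, x_{m-1}, x_m)` is a solution of the system (2.2). -/
def IsSolution (M N m : ℕ) (ζ : Fin (m - 1) → LMP M)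
    (x : Fin (m - 1) → LMP M) (xm : LMP M) : Prop :=
  (∀ j, x j ∈ PplusN M N) ∧ xm ∈ PplusN M N ∧
    (∀ j, xm * ζ j - adjM (x j) ∈ Pplus M) ∧
    ((∑ j, ζ j * x j) + adjM xm ∈ Pplus M)


lemma lp_mul_coeff_neg (p q : LaurentPolynomial ℂ) (hp : ∀ n : ℤ, n < 0 → p.coeff n = 0)
    (hq : ∀ n : ℤ, n < 0 → q.coeff n = 0) (n : ℤ) (hn : n < 0) : (p * q).coeff n = 0 := by
  rw [AddMonoidAlgebra.mul_apply, Finsupp.sum]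
  apply Finset.sum_eq_zero
  intro a _
  rw [Finsupp.sum]
  apply Finset.sum_eq_zero
  intro b _
  split_ifs with h
  · rcases lt_or_ge a 0 with ha | ha
    · rw [hp a ha, zero_mul]
    · have hb : b < 0 := by omega
      rw [hq b hb, mul_zero]
  · rfl

lemma Pplus_mul {M : ℕ} {P Q : LMP M} (hP : P ∈ Pplus M) (hQ : Q ∈ Pplus M) :
    P * Q ∈ Pplus M := by
  intro n hn
  funext i j
  have : ((P * Q) i j).coeff n = ∑ k, (P i k * Q k j).coeff n := by
    rw [Matrix.mul_apply, AddMonoidAlgebra.coeff_sum]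
    exact Finset.sum_apply' n
  show ((P * Q) i j).coeff n = (0 : Matrix (Fin M) (Fin M) ℂ) i j
  rw [this]
  apply Finset.sum_eq_zero
  intro k _
  exact lp_mul_coeff_neg _ _ (fun t ht => congrFun (congrFun (hP t ht) i) k)
    (fun t ht => congrFun (congrFun (hQ t ht) k) j) n hn

lemma Pplus_add {M : ℕ} {P Q : LMP M} (hP : P ∈ Pplus M) (hQ : Q ∈ Pplus M) :
    P + Q ∈ Pplus M := by
  intro n hn
  funext i j
  show ((P + Q) i j).coeff n = (0 : Matrix (Fin M) (Fin M) ℂ) i j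
  have h1 := congrFun (congrFun (hP n hn) i) j
  have h2 := congrFun (congrFun (hQ n hn) i) j
  simp only [Matrix.add_apply, Finsupp.add_apply]
  simp only [coeffM, Matrix.zero_apply] at h1 h2
  rw [AddMonoidAlgebra.coeff_add, Finsupp.add_apply, h1, h2, add_zero, Matrix.zero_apply]

lemma Pplus_neg {M : ℕ} {P : LMP M} (hP : P ∈ Pplus M) : -P ∈ Pplus M := by
  intro n hn
  funext i j
  show ((-P) i j).coeff n = (0 : Matrix (Fin M) (Fin M) ℂ) i j
  have h1 := congrFun (congrFun (hP n hn) i) j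
  simp only [coeffM, Matrix.zero_apply] at h1
  rw [Matrix.neg_apply, AddMonoidAlgebra.coeff_neg, Finsupp.neg_apply, h1, neg_zero, Matrix.zero_apply]

lemma Pplus_sub {M : ℕ} {P Q : LMP M} (hP : P ∈ Pplus M) (hQ : Q ∈ Pplus M) :
    P - Q ∈ Pplus M := by
  rw [sub_eq_add_neg]; exact Pplus_add hP (Pplus_neg hQ)

lemma Pplus_sum {M : ℕ} {ι : Type*} (s : Finset ι) (f : ι → LMP M)
    (hf : ∀ i ∈ s, f i ∈ Pplus M) : (∑ i ∈ s, f i) ∈ Pplus M := by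
  classical
  induction s using Finset.induction with
  | empty => intro n hn; funext i j; simp [coeffM]
  | insert _ _ hx ih =>
      rw [Finset.sum_insert hx]
      exact Pplus_add (hf _ (Finset.mem_insert_self _ _))
        (ih fun i hi => hf i (Finset.mem_insert_of_mem hi))

lemma PplusN_subset {M N : ℕ} {P : LMP M} (hP : P ∈ PplusN M N) : P ∈ Pplus M :=
  fun n hn => hP n (Or.inl hn)

/-- relation (3.3): for any two solutions `u`, `v` of the system,
`Σ_{i=1}^{m-1} ~u_i · v_i + u_m · ~v_m ∈ P^+(M)`. -/
theorem lemma_sum_mem_Pplus (M N m : ℕ) (hM : 0 < M) (hN : 0 < N) (hm : 2 ≤ m)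
    (ζ : Fin (m - 1) → LMP M) (hζ : ∀ j, ζ j ∈ PminusN M N)
    (u : Fin (m - 1) → LMP M) (um : LMP M)
    (v : Fin (m - 1) → LMP M) (vm : LMP M)
    (hu : IsSolution M N m ζ u um) (hv : IsSolution M N m ζ v vm) :
    (∑ i, adjM (u i) * v i) + um * adjM vm ∈ Pplus M := by
  obtain ⟨huN, humN, hup, huq⟩ := hu
  obtain ⟨hvN, hvmN, hvp, hvq⟩ := hv
  have key : (∑ i, adjM (u i) * v i) + um * adjM vm
      = um * ((∑ j, ζ j * v j) + adjM vm) - ∑ i, (um * ζ i - adjM (u i)) * v i := by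
    rw [mul_add, Finset.mul_sum]
    rw [Finset.sum_congr rfl (fun i _ => sub_mul (um * ζ i) (adjM (u i)) (v i))]
    rw [Finset.sum_sub_distrib]
    simp only [mul_assoc]
    abel
  rw [key]
  exact Pplus_sub
    (Pplus_mul (PplusN_subset humN) hvq)
    (Pplus_sum _ _ (fun i _ => Pplus_mul (hup i) (PplusN_subset (hvN i))))
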